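/- Let A be a C*-algebra, let I be a largest proper ideal of A, and let p ∈ A be a full projection. Then the hereditary subalgebra pIp is full in I; that is, every ideal J of A with J ⊆ I and pxp ∈ J for all x ∈ I satisfies J = I. (Since in a C*-algebra the closed two-sided ideals of an ideal I are exactly the closed two-sided ideals of A contained in I, this says exactly that the inclusion pIp ↪ I is a full inclusion.) -/

import Mathlib

open scoped NNReal
set_option maxHeartbeats 1000000

/-- In a C*-algebra, a closed two-sided ideal contains `a` whenever it contains
`star a * a`. -/
lemma TwoSidedIdeal.mem_of_star_mul_self_mem' {A : Type*} [NonUnitalCStarAlgebra A]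
    (J : TwoSidedIdeal A) (hJ : IsClosed (J : Set A)) {a : A}
    (h : star a * a ∈ J) : a ∈ J := by
  set b := star a * a with hb_def
  have hb : IsSelfAdjoint b := IsSelfAdjoint.star_mul_self a
  suffices hcl : a ∈ closure (J : Set A) by rw [hJ.closure_eq] at hcl; exact hcl
  rw [Metric.mem_closure_iff]
  intro δ hδ
  set s : ℝ := (δ/2)^2 with hs_def
  set ε : ℝ := s^2 with hε_def
  have hs : 0 < s := by positivity
  have hε : 0 < ε := by positivity
  set cf : ℝ → ℝ := fun t => t/(t^2+ε) with hcf
  have hden : ∀ t : ℝ, t^2 + ε ≠ 0 := fun t => by positivity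
  have hcfc : ContinuousOn cf (quasispectrum ℝ b) :=
    (continuous_id.div (by continuity) fun x => by positivity).continuousOn
  set gf : ℝ → ℝ := fun t => t * cf t with hgf
  have hgfc : ContinuousOn gf (quasispectrum ℝ b) := continuousOn_id.mul hcfc
  have hgf0 : gf 0 = 0 := by simp [hgf]
  set e : A := cfcₙ gf b with he_def
  have heJ : e ∈ J := by
    rw [he_def, hgf, cfcₙ_mul _ _ b (continuousOn_id' _) (by simp) hcfc (by simp [hcf]),
      cfcₙ_id' ℝ b]
    exact J.mul_mem_right _ _ h
  have hesa : IsSelfAdjoint e := cfcₙ_predicate gf b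
  set d := a - a * e with hd_def
  have h1 : star d * d = b - b * e - e * b + e * b * e := by
    rw [hd_def, hb_def, star_sub, star_mul, hesa.star_eq]
    noncomm_ring
  set f1 : ℝ → ℝ := fun t => t * gf t with hf1
  set f2 : ℝ → ℝ := fun t => gf t * t with hf2
  have hf1c : ContinuousOn f1 (quasispectrum ℝ b) := (continuousOn_id' _).mul hgfc
  have hf2c : ContinuousOn f2 (quasispectrum ℝ b) := hgfc.mul (continuousOn_id' _)
  have hbe : b * e = cfcₙ f1 b := by
    rw [hf1, cfcₙ_mul _ _ b (continuousOn_id' _) (by simp) hgfc hgf0, cfcₙ_id' ℝ b]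
  have heb : e * b = cfcₙ f2 b := by
    conv_rhs => rw [hf2, cfcₙ_mul _ _ b hgfc hgf0 (continuousOn_id' _) (by simp), cfcₙ_id' ℝ b]
  have hebe : e * b * e = cfcₙ (fun t => f2 t * gf t) b := by
    rw [cfcₙ_mul _ _ b hf2c (by simp [hf2, hgf0]) hgfc hgf0, ← heb]
  set F : ℝ → ℝ := fun t => t - f1 t - f2 t + f2 t * gf t with hF
  have h2 : star d * d = cfcₙ F b := by
    rw [h1, hebe, hbe, heb, hF]
    rw [cfcₙ_add (fun t => t - f1 t - f2 t) (fun t => f2 t * gf t) b (((continuousOn_id' _).sub hf1c).sub hf2c) (by simp [hf1, hf2, hgf0])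
      (hf2c.mul hgfc) (by simp [hf2, hgf0])]
    rw [cfcₙ_sub (fun t => t - f1 t) f2 b ((continuousOn_id' _).sub hf1c) (by simp [hf1, hgf0]) hf2c
        (by simp [hf2, hgf0]),
      cfcₙ_sub (fun t => t) f1 b (continuousOn_id' _) (by simp) hf1c (by simp [hf1, hgf0]), cfcₙ_id' ℝ b]
  have hFval : ∀ t : ℝ, F t = t * ε^2 / (t^2+ε)^2 := by
    intro t
    have := hden t
    simp only [hF, hf1, hf2, hgf, hcf]
    field_simp
    ring
  have hFbound : ∀ t : ℝ, |F t| ≤ s/2 := by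
    intro t
    rw [hFval t, hε_def, abs_div, abs_of_nonneg (by positivity : (0:ℝ) ≤ (t^2 + s^2)^2),
      div_le_iff₀ (by positivity)]
    have h1 : |t * (s^2)^2| = |t| * s^4 := by
      rw [abs_mul, abs_of_nonneg (by positivity : (0:ℝ) ≤ (s^2)^2)]; ring
    rw [h1]
    have h0 : 0 ≤ |t| := abs_nonneg t
    have hA : 2 * |t| * s ≤ t^2 + s^2 := by nlinarith [sq_nonneg (|t| - s), sq_abs t]
    have hB : (2 * |t| * s) * (t^2 + s^2) ≤ (t^2 + s^2)^2 := by
      have := mul_nonneg (by positivity : (0:ℝ) ≤ t^2 + s^2) (sub_nonneg.mpr hA)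
      nlinarith [this]
    have hC : (2 * |t| * s) * s^2 ≤ (2 * |t| * s) * (t^2 + s^2) := by
      have h2s : (0:ℝ) ≤ 2 * |t| * s := by positivity
      nlinarith [mul_nonneg h2s (sq_nonneg t)]
    have hB' := mul_le_mul_of_nonneg_left hB (le_of_lt (half_pos hs))
    have hC' := mul_le_mul_of_nonneg_left hC (le_of_lt (half_pos hs))
    have hkey : |t| * s^4 = s/2 * ((2 * |t| * s) * s^2) := by ring
    linarith
  have hnorm : ‖star d * d‖ ≤ s/2 := by
    rw [h2]
    exact norm_cfcₙ_le fun t _ => by rw [Real.norm_eq_abs]; exact hFbound t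
  have hdd : ‖d‖ * ‖d‖ ≤ s/2 := by
    rwa [CStarRing.norm_star_mul_self] at hnorm
  refine ⟨a * e, J.mul_mem_left _ _ heJ, ?_⟩
  rw [dist_eq_norm]
  have hdn : ‖a - a * e‖ = ‖d‖ := rfl
  rw [hdn]
  nlinarith [norm_nonneg d, hδ]

/-- Closed two-sided ideals in C*-algebras are star-closed. -/
lemma TwoSidedIdeal.star_mem_of_mem' {A : Type*} [NonUnitalCStarAlgebra A]
    (J : TwoSidedIdeal A) (hJ : IsClosed (J : Set A)) {a : A} (h : a ∈ J) :
    star a ∈ J :=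
  J.mem_of_star_mul_self_mem' hJ (by rw [star_star]; exact J.mul_mem_right _ _ h)

/-- A (closed two-sided) ideal `I` of a C*-algebra `A` is a largest proper ideal
if it is proper and every closed two-sided ideal `J` of `A` satisfies `J ⊆ I` or
`J = A`. -/
def IsLargestProperIdeal {A : Type*} [NonUnitalCStarAlgebra A]
    (I : TwoSidedIdeal A) : Prop :=
  IsClosed (I : Set A) ∧ I ≠ ⊤ ∧
    ∀ J : TwoSidedIdeal A, IsClosed (J : Set A) → J ≤ I ∨ J = ⊤

/-- Let `I` be a largest proper ideal of a C*-algebra `A` and let `p` be a full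
projection.  Then `pIp` is full in `I`: every closed two-sided ideal `J` of `A`
with `J ⊆ I` and containing `p x p` for all `x ∈ I` equals `I`.  (Since the
closed two-sided ideals of the ideal `I` are exactly the closed two-sided
ideals of `A` contained in `I`, this says that the inclusion `pIp ↪ I` is a
full inclusion.) -/
theorem corner_full_in_largestProperIdeal {A : Type*} [NonUnitalCStarAlgebra A]
    (I : TwoSidedIdeal A) (hI : IsLargestProperIdeal I)
    (p : A) (hp : star p = p ∧ p * p = p)
    (hpfull : ∀ J : TwoSidedIdeal A, IsClosed (J : Set A) → p ∈ J → J = ⊤) :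
    ∀ J : TwoSidedIdeal A, IsClosed (J : Set A) → J ≤ I →
      (∀ x ∈ I, p * x * p ∈ J) → J = I := by
  intro J hJc hJI hpJ
  obtain ⟨hp1, hp2⟩ := hp
  set S : Set A := {a | ∀ x ∈ I, a * x ∈ J ∧ x * a ∈ J} with hS
  let K : TwoSidedIdeal A := TwoSidedIdeal.mk' S
    (fun x hx => ⟨by simp, by simp⟩)
    (fun {a b} ha hb x hx => ⟨by rw [add_mul]; exact J.add_mem (ha x hx).1 (hb x hx).1,
      by rw [mul_add]; exact J.add_mem (ha x hx).2 (hb x hx).2⟩)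
    (fun {a} ha x hx => ⟨by rw [neg_mul]; exact J.neg_mem (ha x hx).1,
      by rw [mul_neg]; exact J.neg_mem (ha x hx).2⟩)
    (fun {x y} hy z hz => ⟨by rw [mul_assoc]; exact J.mul_mem_left _ _ (hy z hz).1,
      by rw [← mul_assoc]; exact (hy _ (I.mul_mem_right z x hz)).2⟩)
    (fun {x y} hx z hz => ⟨by rw [mul_assoc]; exact (hx _ (I.mul_mem_left y z hz)).1,
      by rw [← mul_assoc]; exact J.mul_mem_right _ _ (hx z hz).2⟩)
  have hKS : (K : Set A) = S := TwoSidedIdeal.coe_mk' ..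
  have hKc : IsClosed (K : Set A) := by
    rw [hKS]
    have : S = ⋂ x ∈ (I : Set A), ((· * x) ⁻¹' (J : Set A) ∩ (x * ·) ⁻¹' (J : Set A)) := by
      ext a
      simp only [hS, Set.mem_setOf_eq, Set.mem_iInter, Set.mem_inter_iff, Set.mem_preimage,
        SetLike.mem_coe]
    rw [this]
    exact isClosed_biInter fun x hx =>
      (hJc.preimage (continuous_mul_right x)).inter (hJc.preimage (continuous_mul_left x))
  have hpK : p ∈ K := by
    rw [TwoSidedIdeal.mem_mk']
    intro x hx
    constructor
    · -- p * x ∈ J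
      have h1 : star x * p ∈ J := by
        apply J.mem_of_star_mul_self_mem' hJc
        have : star (star x * p) * (star x * p) = p * (x * star x) * p := by
          rw [star_mul, star_star, hp1]; simp [mul_assoc]
        rw [this]
        exact hpJ _ (I.mul_mem_right x (star x) hx)
      have := J.star_mem_of_mem' hJc h1
      rwa [star_mul, star_star, hp1] at this
    · -- x * p ∈ J
      apply J.mem_of_star_mul_self_mem' hJc
      have : star (x * p) * (x * p) = p * (star x * x) * p := by
        rw [star_mul, hp1]; simp [mul_assoc]
      rw [this]
      exact hpJ _ (I.mul_mem_left (star x) x hx)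
  have hK : K = ⊤ := hpfull K hKc hpK
  refine le_antisymm hJI ?_
  intro x hx
  have hxK : star x ∈ K := by rw [hK]; trivial
  rw [TwoSidedIdeal.mem_mk'] at hxK
  exact J.mem_of_star_mul_self_mem' hJc (hxK x hx).1
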